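/- Let d ≥ 2 and consider the map f_0 from the open set of symmetric positive definite d×d matrices to ℝ^{d−1} whose (k−1)-th component (k = 2,…,d) is Σ ↦ Σ_{k,k|{1,…,k−1}} − Σ_{1,1}. Then f_0 is differentiable and its Fréchet derivative at every symmetric positive definite Σ, viewed as a linear map from the space of symmetric d×d matrices to ℝ^{d−1}, is surjective (i.e., the Jacobian of f_0 has full rank d−1). -/

import Mathlib

open Matrix Finset

attribute [local instance] Matrix.normedAddCommGroup Matrix.normedSpace

/-- Conditional covariance `Σ_{k,i|S} = Σ_{k,i} - Σ_{k,S} (Σ_{S,S})⁻¹ Σ_{S,i}`. -/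
noncomputable def condCov {d : ℕ} (M : Matrix (Fin d) (Fin d) ℝ) (S : Finset (Fin d))
    (k i : Fin d) : ℝ :=
  M k i - ∑ a : S, ∑ b : S, M k a * (Matrix.of fun a b : S => M a b)⁻¹ a b * M b i

/-- The defining map `f_0` of the equal-error-variance model for the complete DAG
with ordering `(1, …, d)`: the `(k-1)`-th component (`k = 2, …, d`) is
`Σ_{k,k|{1,…,k-1}} - Σ_{1,1}`. -/
noncomputable def fzero {n : ℕ}
    (Sig : Matrix (Fin (n + 2)) (Fin (n + 2)) ℝ) : Fin (n + 1) → ℝ :=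
  fun m => condCov Sig (Finset.Iio (m.succ : Fin (n + 2))) m.succ m.succ - Sig 0 0

/-! ### Auxiliary lemmas -/

/-- Evaluation of a matrix entry as a continuous linear map. -/
noncomputable def entryCLM (d : ℕ) (i j : Fin d) : Matrix (Fin d) (Fin d) ℝ →L[ℝ] ℝ :=
  LinearMap.mkContinuous
    { toFun := fun M => M i j, map_add' := fun _ _ => rfl, map_smul' := fun _ _ => rfl } 1
    (fun M => by change |M i j| ≤ 1 * ‖M‖; simpa using Matrix.norm_entry_le_entrywise_sup_norm M)

lemma differentiable_entry {d : ℕ} (i j : Fin d) :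
    Differentiable ℝ (fun M : Matrix (Fin d) (Fin d) ℝ => M i j) :=
  (entryCLM d i j).differentiable

lemma differentiableAt_det_comp {E : Type*} [NormedAddCommGroup E] [NormedSpace ℝ E]
    {ι : Type*} [Fintype ι] [DecidableEq ι]
    {f : E → Matrix ι ι ℝ} {x : E} (h : ∀ i j, DifferentiableAt ℝ (fun M => f M i j) x) :
    DifferentiableAt ℝ (fun M => (f M).det) x := by
  simp only [Matrix.det_apply']
  refine DifferentiableAt.fun_sum fun σ _ => DifferentiableAt.const_mul ?_ _
  exact (HasFDerivAt.finset_prod fun i _ => (h (σ i) i).hasFDerivAt).differentiableAt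

lemma differentiableAt_inv_entry {E : Type*} [NormedAddCommGroup E] [NormedSpace ℝ E]
    {ι : Type*} [Fintype ι] [DecidableEq ι]
    {f : E → Matrix ι ι ℝ} {x : E} (h : ∀ i j, DifferentiableAt ℝ (fun M => f M i j) x)
    (hdet : (f x).det ≠ 0) (a b : ι) :
    DifferentiableAt ℝ (fun M => (f M)⁻¹ a b) x := by
  have key : (fun M => (f M)⁻¹ a b)
      = fun M => ((f M).det)⁻¹ * ((f M).updateRow b (Pi.single a 1)).det := by
    funext M
    rw [Matrix.inv_def, Matrix.smul_apply, Ring.inverse_eq_inv', Matrix.adjugate_apply]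
    rfl
  rw [key]
  refine DifferentiableAt.mul ((differentiableAt_det_comp h).inv hdet) ?_
  refine differentiableAt_det_comp fun i j => ?_
  rcases eq_or_ne b i with rfl | hib
  · have : (fun M => (f M).updateRow b (Pi.single a 1) b j)
        = fun _ : E => (Pi.single a (1:ℝ) : ι → ℝ) j := by
      funext M; rw [Matrix.updateRow_self]
    rw [this]; exact differentiableAt_const _
  · simp only [Matrix.updateRow_apply, if_neg (Ne.symm hib)]
    exact h i j

lemma posDef_principal {d : ℕ} {A : Matrix (Fin d) (Fin d) ℝ} (h : A.PosDef)
    (S : Finset (Fin d)) : (Matrix.of fun a b : S => A a b).PosDef := by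
  refine Matrix.PosDef.of_dotProduct_mulVec_pos ?_ ?_
  · ext a b
    simp only [conjTranspose_apply, Matrix.of_apply, star_trivial]
    exact congrFun (congrFun h.1 a) b
  · intro x hx
    set y : Fin d → ℝ := fun i => if hi : i ∈ S then x ⟨i, hi⟩ else 0 with hy
    have hxy : ∀ a : S, x a = y a := fun a => by simp [hy, a.2]
    have hy0 : y ≠ 0 := by
      intro h0
      apply hx
      funext a
      have := congrFun h0 a
      rw [← hxy a] at this
      exact this
    have hpos := h.dotProduct_mulVec_pos hy0
    have hyS : ∀ i, i ∉ S → y i = 0 := fun i hi => dif_neg hi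
    have inner : ∀ i, (∑ j, A i j * y j) = ∑ j ∈ S, A i j * y j :=
      fun i => (Finset.sum_subset (Finset.subset_univ S)
        (fun j _ hj => by rw [hyS j hj, mul_zero])).symm
    have key : dotProduct (star y) (A *ᵥ y)
        = dotProduct (star x) ((Matrix.of fun a b : S => A a b) *ᵥ x) := by
      simp only [dotProduct, mulVec, star_trivial, Matrix.of_apply]
      calc (∑ i, y i * ∑ j, A i j * y j)
          = ∑ i ∈ S, y i * ∑ j ∈ S, A i j * y j := by
            rw [← Finset.sum_subset (Finset.subset_univ S)
              (fun i _ hi => by rw [hyS i hi, zero_mul])]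
            exact Finset.sum_congr rfl fun i _ => by rw [inner]
        _ = ∑ a : S, y a * ∑ b : S, A a b * y b := by
            rw [← Finset.sum_coe_sort S (fun i => y i * ∑ j ∈ S, A i j * y j)]
            exact Finset.sum_congr rfl fun a _ => by
              rw [← Finset.sum_coe_sort S (fun j => A a j * y j)]
        _ = ∑ a : S, x a * ∑ b : S, A a b * x b := by
            exact Finset.sum_congr rfl fun a _ => by
              rw [hxy a]
              exact congrArg _ (Finset.sum_congr rfl fun b _ => by rw [hxy b])
    rw [← key]
    exact hpos

lemma differentiableAt_condCov {d : ℕ} (S : Finset (Fin d)) (k i : Fin d)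
    {x : Matrix (Fin d) (Fin d) ℝ} (hdet : (Matrix.of fun a b : S => x a b).det ≠ 0) :
    DifferentiableAt ℝ (fun M => condCov M S k i) x := by
  have hent : ∀ p q : Fin d,
      DifferentiableAt ℝ (fun M : Matrix (Fin d) (Fin d) ℝ => M p q) x :=
    fun p q => (differentiable_entry p q).differentiableAt
  have hinv : ∀ a b : S, DifferentiableAt ℝ (fun M : Matrix (Fin d) (Fin d) ℝ =>
      (Matrix.of fun a b : S => M a b)⁻¹ a b) x :=
    fun a b => differentiableAt_inv_entry (E := Matrix (Fin d) (Fin d) ℝ) (ι := S) (x := x)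
      (f := fun M => Matrix.of fun a b : S => M a b) (fun i j => hent i j) hdet a b
  unfold condCov
  refine DifferentiableAt.sub (hent k i) ?_
  refine DifferentiableAt.fun_sum fun a _ => DifferentiableAt.fun_sum fun b _ => ?_
  exact DifferentiableAt.mul (DifferentiableAt.mul (hent _ _) (hinv a b)) (hent _ _)

lemma differentiableAt_fzero_comp {n : ℕ} {Sig : Matrix (Fin (n + 2)) (Fin (n + 2)) ℝ}
    (hpd : Sig.PosDef) (m : Fin (n + 1)) :
    DifferentiableAt ℝ (fun M => fzero M m) Sig := by
  have hdet : (Matrix.of fun a b : (Finset.Iio (m.succ : Fin (n + 2))) => Sig a b).det ≠ 0 :=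
    (posDef_principal hpd _).det_pos.ne'
  have hrw : (fun M : Matrix (Fin (n + 2)) (Fin (n + 2)) ℝ => fzero M m)
      = fun M => condCov M (Finset.Iio (m.succ : Fin (n + 2))) m.succ m.succ - M 0 0 := rfl
  rw [hrw]
  exact (differentiableAt_condCov _ _ _ hdet).sub (differentiable_entry 0 0).differentiableAt

lemma add_smul_std_apply {d : ℕ} (M : Matrix (Fin d) (Fin d) ℝ) (k : Fin d) (t : ℝ)
    {i j : Fin d} (h : ¬(k = i ∧ k = j)) :
    (M + t • Matrix.single k k (1:ℝ)) i j = M i j := by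
  simp [Matrix.single, Matrix.add_apply, Matrix.smul_apply, h]

lemma fzero_shift {n : ℕ} (M : Matrix (Fin (n + 2)) (Fin (n + 2)) ℝ) (m : Fin (n + 1))
    (k : Fin (n + 2)) (t : ℝ) (hk : (m.succ : Fin (n + 2)) ≤ k) :
    fzero (M + t • Matrix.single k k (1:ℝ)) m
      = fzero M m + (if k = (m.succ : Fin (n + 2)) then t else 0) := by
  set M' := M + t • Matrix.single k k (1 : ℝ) with hM'
  have hka : ∀ a : Fin (n + 2), a < (m.succ : Fin (n + 2)) → k ≠ a :=
    fun a ha => (lt_of_lt_of_le ha hk).ne'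
  have hsub : (Matrix.of fun a b : (Finset.Iio (m.succ : Fin (n + 2))) => M' a b)
      = Matrix.of fun a b : (Finset.Iio (m.succ : Fin (n + 2))) => M a b := by
    ext a b
    exact add_smul_std_apply M k t (fun hc => hka a (Finset.mem_Iio.mp a.2) hc.1)
  have hrow : ∀ a : (Finset.Iio (m.succ : Fin (n + 2))),
      M' (m.succ : Fin (n + 2)) a = M (m.succ : Fin (n + 2)) a :=
    fun a => add_smul_std_apply M k t (fun hc => hka a (Finset.mem_Iio.mp a.2) hc.2)
  have hcol : ∀ a : (Finset.Iio (m.succ : Fin (n + 2))),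
      M' a (m.succ : Fin (n + 2)) = M a (m.succ : Fin (n + 2)) :=
    fun a => add_smul_std_apply M k t (fun hc => hka a (Finset.mem_Iio.mp a.2) hc.1)
  have h00 : M' 0 0 = M 0 0 := by
    refine add_smul_std_apply M k t (fun hc => ?_)
    exact absurd (hc.1 ▸ hk) (by simp [Fin.pos_iff_ne_zero.mp (Fin.succ_pos m)])
  have hdiag : M' (m.succ : Fin (n + 2)) (m.succ : Fin (n + 2))
      = M (m.succ : Fin (n + 2)) (m.succ : Fin (n + 2))
        + (if k = (m.succ : Fin (n + 2)) then t else 0) := by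
    rcases eq_or_ne k (m.succ : Fin (n + 2)) with hkm | hkm
    · subst hkm
      simp [hM', Matrix.single, Matrix.add_apply, Matrix.smul_apply]
    · rw [if_neg hkm, add_zero]
      exact add_smul_std_apply M k t (fun hc => hkm hc.1)
  unfold fzero condCov
  rw [hsub, hdiag, h00]
  have hq : ∀ a b : (Finset.Iio (m.succ : Fin (n + 2))),
      M' (m.succ : Fin (n+2)) a * (Matrix.of fun a b : (Finset.Iio (m.succ : Fin (n+2))) => M a b)⁻¹ a b * M' b (m.succ : Fin (n+2))
      = M (m.succ : Fin (n+2)) a * (Matrix.of fun a b : (Finset.Iio (m.succ : Fin (n+2))) => M a b)⁻¹ a b * M b (m.succ : Fin (n+2)) :=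
    fun a b => by rw [hrow a, hcol b]
  rw [Finset.sum_congr rfl fun a _ => Finset.sum_congr rfl fun b _ => hq a b]
  ring

lemma fderiv_fzero_dir {n : ℕ} {Sig : Matrix (Fin (n + 2)) (Fin (n + 2)) ℝ}
    (m : Fin (n + 1)) (hd : DifferentiableAt ℝ (fun M => fzero M m) Sig)
    (k : Fin (n + 2)) (hk : (m.succ : Fin (n + 2)) ≤ k) :
    fderiv ℝ (fun M => fzero M m) Sig (Matrix.single k k (1:ℝ))
      = if k = (m.succ : Fin (n + 2)) then 1 else 0 := by
  set B := Matrix.single k k (1:ℝ) with hB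
  have hg : HasDerivAt (fun t : ℝ => Sig + t • B) B 0 := by
    have h := ((hasDerivAt_id (0:ℝ)).smul_const B).const_add Sig; rw [one_smul] at h; exact h
  have hl : HasFDerivAt (fun M => fzero M m) (fderiv ℝ (fun M => fzero M m) Sig)
      ((fun t : ℝ => Sig + t • B) 0) := by
    simpa using hd.hasFDerivAt
  have h1 : HasDerivAt (fun t : ℝ => fzero (Sig + t • B) m)
      (fderiv ℝ (fun M => fzero M m) Sig B) 0 := by exact hl.comp_hasDerivAt 0 hg
  have heq : (fun t : ℝ => fzero (Sig + t • B) m)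
      = fun t : ℝ => fzero Sig m + (if k = (m.succ : Fin (n + 2)) then t else 0) := by
    funext t
    rw [fzero_shift Sig m k t hk]
  rw [heq] at h1
  rcases eq_or_ne k (m.succ : Fin (n + 2)) with hkm | hkm
  · simp only [if_pos hkm] at h1 ⊢
    exact h1.unique (((hasDerivAt_id (0:ℝ)).const_add (fzero Sig m)))
  · simp only [if_neg hkm] at h1 ⊢
    simpa using h1.unique (by simpa using hasDerivAt_const (0:ℝ) (fzero Sig m))

theorem stmt14 {n : ℕ}
    (Sig : Matrix (Fin (n + 2)) (Fin (n + 2)) ℝ) (hsym : Sig.IsSymm) (hpd : Sig.PosDef) :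
    DifferentiableAt ℝ fzero Sig ∧
    ∀ y : Fin (n + 1) → ℝ, ∃ H : Matrix (Fin (n + 2)) (Fin (n + 2)) ℝ,
      H.IsSymm ∧ fderiv ℝ fzero Sig H = y := by
  have hdm : ∀ m, DifferentiableAt ℝ (fun M => fzero M m) Sig :=
    fun m => differentiableAt_fzero_comp hpd m
  have hdiff : DifferentiableAt ℝ fzero Sig := differentiableAt_pi.mpr hdm
  refine ⟨hdiff, fun y => ?_⟩
  -- the component formula for the full derivative
  have hcomp : ∀ (H : Matrix (Fin (n + 2)) (Fin (n + 2)) ℝ) (m : Fin (n + 1)),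
      fderiv ℝ fzero Sig H m = fderiv ℝ (fun M => fzero M m) Sig H := by
    intro H m
    exact congrFun (congrArg (fun L => L H) (fderiv_pi hdm)) m
  -- the Jacobian on diagonal directions
  set A : Matrix (Fin (n + 1)) (Fin (n + 1)) ℝ :=
    Matrix.of fun j m => fderiv ℝ (fun M => fzero M m) Sig
      (Matrix.single ((j.succ : Fin (n + 2))) (j.succ) (1:ℝ)) with hA
  have hAdiag : ∀ j, A j j = 1 := by
    intro j
    rw [hA]
    show fderiv ℝ (fun M => fzero M j) Sig _ = 1
    rw [fderiv_fzero_dir j (hdm j) _ le_rfl, if_pos rfl]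
  have htri : A.BlockTriangular id := by
    intro i j hij
    show fderiv ℝ (fun M => fzero M j) Sig _ = 0
    have hij' : j < i := hij
    have hle : (j.succ : Fin (n + 2)) ≤ (i.succ : Fin (n + 2)) :=
      le_of_lt (by exact_mod_cast Fin.succ_lt_succ_iff.mpr hij')
    rw [fderiv_fzero_dir j (hdm j) _ hle, if_neg]
    exact fun hc => (Fin.succ_injective _ hc ▸ hij').false
  have hdet : A.det = 1 := by
    rw [Matrix.det_of_upperTriangular htri]
    exact Finset.prod_eq_one fun j _ => hAdiag j
  have hunit : IsUnit A.det := by rw [hdet]; exact isUnit_one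
  set c : Fin (n + 1) → ℝ := y ᵥ* A⁻¹ with hc
  have hvec : c ᵥ* A = y := by
    rw [hc, Matrix.vecMul_vecMul, Matrix.nonsing_inv_mul A hunit, Matrix.vecMul_one]
  refine ⟨∑ j, c j • Matrix.single ((j.succ : Fin (n + 2))) (j.succ) (1:ℝ), ?_, ?_⟩
  · -- symmetry
    unfold Matrix.IsSymm
    rw [Matrix.transpose_sum]
    refine Finset.sum_congr rfl fun j _ => ?_
    rw [Matrix.transpose_smul]
    congr 1
    ext a b
    simp [Matrix.single, and_comm]
  · -- derivative hits y
    funext m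
    rw [map_sum]
    have : ∀ j, fderiv ℝ fzero Sig
        (c j • Matrix.single ((j.succ : Fin (n + 2))) (j.succ) (1:ℝ))
        = c j • fderiv ℝ fzero Sig
          (Matrix.single ((j.succ : Fin (n + 2))) (j.succ) (1:ℝ)) :=
      fun j => map_smul _ _ _
    rw [Finset.sum_congr rfl fun j _ => this j]
    rw [Finset.sum_apply]
    have : ∀ j, (c j • fderiv ℝ fzero Sig
        (Matrix.single ((j.succ : Fin (n + 2))) (j.succ) (1:ℝ))) m
        = c j * A j m := by
      intro j
      rw [Pi.smul_apply, hcomp]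
      rfl
    rw [Finset.sum_congr rfl fun j _ => this j]
    exact congrFun hvec m
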